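/- arXiv:1711.03152 — 3 statements merged into one kernel-verified Lean document; each statement's English description precedes it below -/
import Mathlib

section
/- Let X₁,…,X_N be independent random variables and Z = f(X₁,…,X_N) square-integrable. For each i let X_i' be an independent copy of X_i (the copies being mutually independent and independent of (X₁,…,X_N)), and let Z^{(i)} = f(X₁,…,X_i',…,X_N). Then Var[Z] ≤ (1/2) · Σ_{i=1}^N E[(Z − Z^{(i)})²]. -/
open MeasureTheory ProbabilityTheory Finset

namespace EfronStein

set_option linter.unusedSectionVars false

variable {N : ℕ} {Ω : Fin N → Type*} [∀ i, MeasurableSpace (Ω i)]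

/-- Merge two points of the product space: take `x` on `s`, `y` off `s`. -/
def mrg (s : Finset (Fin N)) (x y : ∀ i, Ω i) : ∀ i, Ω i :=
  fun i => if i ∈ s then x i else y i

lemma mrg_mrg_left (s : Finset (Fin N)) (x y w : ∀ i, Ω i) :
    mrg s (mrg s x y) w = mrg s x w := by
  funext i; by_cases h : i ∈ s <;> simp [mrg, h]

lemma mrg_assoc (t c : Finset (Fin N)) (x y w : ∀ i, Ω i) :
    mrg c (mrg t x y) w = mrg (t ∩ c) x (mrg c y w) := by
  funext i
  by_cases h1 : i ∈ c <;> by_cases h2 : i ∈ t <;> simp [mrg, h1, h2]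

lemma mrg_univ (x y : ∀ i, Ω i) : mrg univ x y = x := by funext i; simp [mrg]

lemma mrg_empty (x y : ∀ i, Ω i) : mrg ∅ x y = y := by funext i; simp [mrg]

lemma mrg_compl_single (i : Fin N) (x y : ∀ i, Ω i) :
    mrg {i}ᶜ x y = Function.update x i (y i) := by
  funext j
  rcases eq_or_ne j i with rfl | h
  · simp [mrg, Function.update_self]
  · simp [mrg, h, Function.update_of_ne h]

lemma measurable_mrg (s : Finset (Fin N)) :
    Measurable fun q : (∀ i, Ω i) × (∀ i, Ω i) => mrg s q.1 q.2 := by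
  apply measurable_pi_lambda
  intro i
  by_cases h : i ∈ s
  · have heq : (fun q : (∀ i, Ω i) × (∀ i, Ω i) => mrg s q.1 q.2 i) = fun q => q.1 i := by
      funext q; simp [mrg, h]
    rw [heq]; exact (measurable_pi_apply i).comp measurable_fst
  · have heq : (fun q : (∀ i, Ω i) × (∀ i, Ω i) => mrg s q.1 q.2 i) = fun q => q.2 i := by
      funext q; simp [mrg, h]
    rw [heq]; exact (measurable_pi_apply i).comp measurable_snd

variable (μ : ∀ i, Measure (Ω i)) [∀ i, IsProbabilityMeasure (μ i)]

lemma mp_mrg (s : Finset (Fin N)) :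
    MeasurePreserving (fun q : (∀ i, Ω i) × (∀ i, Ω i) => mrg s q.1 q.2)
      ((Measure.pi μ).prod (Measure.pi μ)) (Measure.pi μ) := by
  refine ⟨measurable_mrg s, ?_⟩
  refine (Measure.pi_eq fun t ht => ?_).symm
  rw [Measure.map_apply (measurable_mrg s) (MeasurableSet.univ_pi ht)]
  have hset : (fun q : (∀ i, Ω i) × (∀ i, Ω i) => mrg s q.1 q.2) ⁻¹' Set.pi Set.univ t
      = (Set.pi Set.univ fun i => if i ∈ s then t i else Set.univ) ×ˢ
        (Set.pi Set.univ fun i => if i ∈ s then Set.univ else t i) := by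
    ext q
    simp only [Set.mem_preimage, Set.mem_pi, Set.mem_univ, forall_true_left, Set.mem_prod]
    constructor
    · intro h
      refine ⟨fun i => ?_, fun i => ?_⟩ <;> by_cases hi : i ∈ s <;>
        simp only [hi, if_true, if_false, Set.mem_univ] <;>
        simpa [mrg, hi] using h i
    · rintro ⟨h1, h2⟩ i
      by_cases hi : i ∈ s
      · have := h1 i; simp only [hi, if_true] at this; simpa [mrg, hi] using this
      · have := h2 i; simp only [hi, if_false] at this; simpa [mrg, hi] using this
  rw [hset, Measure.prod_prod, Measure.pi_pi, Measure.pi_pi, ← Finset.prod_mul_distrib]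
  refine Finset.prod_congr rfl fun i _ => ?_
  by_cases hi : i ∈ s <;> simp [hi]


lemma integral_mrg (s : Finset (Fin N)) {g : (∀ i, Ω i) → ℝ}
    (hg : AEStronglyMeasurable g (Measure.pi μ)) :
    ∫ q, g (mrg s q.1 q.2) ∂((Measure.pi μ).prod (Measure.pi μ))
      = ∫ x, g x ∂(Measure.pi μ) := by
  have h := integral_map (μ := (Measure.pi μ).prod (Measure.pi μ))
      (measurable_mrg s).aemeasurable (f := g) (by rwa [(mp_mrg μ s).map_eq])
  rw [(mp_mrg μ s).map_eq] at h
  exact h.symm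

lemma memℒp_comp_mrg {g : (∀ i, Ω i) → ℝ} (hg : MemLp g 2 (Measure.pi μ))
    (s : Finset (Fin N)) :
    MemLp (fun q : (∀ i, Ω i) × (∀ i, Ω i) => g (mrg s q.1 q.2)) 2
      ((Measure.pi μ).prod (Measure.pi μ)) :=
  hg.comp_measurePreserving (mp_mrg μ s)

lemma mp_fst : MeasurePreserving (Prod.fst : (∀ i, Ω i) × (∀ i, Ω i) → ∀ i, Ω i)
    ((Measure.pi μ).prod (Measure.pi μ)) (Measure.pi μ) :=
  ⟨measurable_fst, by simp⟩

/-- Product of two `L²` functions is integrable. -/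
lemma int_mul {α : Type*} [MeasurableSpace α] {ν : Measure α} {g h : α → ℝ}
    (hg : MemLp g 2 ν) (hh : MemLp h 2 ν) :
    Integrable (fun x => g x * h x) ν := by
  have h2 := hh.smul hg (p := 2) (q := 2) (r := 1)
  exact memLp_one_iff_integrable.mp h2

/-- Jensen / Cauchy–Schwarz on a probability space. -/
lemma sq_integral_le {α : Type*} [MeasurableSpace α] {ν : Measure α}
    [IsProbabilityMeasure ν] {g : α → ℝ} (hg : Integrable g ν)
    (hg2 : Integrable (fun a => g a ^ 2) ν) :
    (∫ a, g a ∂ν) ^ 2 ≤ ∫ a, g a ^ 2 ∂ν := by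
  have hexp : ∫ a, (g a - ∫ b, g b ∂ν) ^ 2 ∂ν
      = ∫ a, g a ^ 2 ∂ν - (∫ a, g a ∂ν) ^ 2 := by
    have hpt : ∀ a, (g a - ∫ b, g b ∂ν) ^ 2
        = g a ^ 2 - (2 * ∫ b, g b ∂ν) * g a + (∫ b, g b ∂ν) ^ 2 := fun a => by ring
    simp_rw [hpt]
    have hI1 : Integrable (fun a => g a ^ 2 - (2 * ∫ b, g b ∂ν) * g a) ν :=
      hg2.sub (hg.const_mul _)
    rw [integral_add hI1 (integrable_const _), integral_sub hg2 (hg.const_mul _),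
      integral_const_mul, integral_const]
    simp only [measure_univ, ENNReal.toReal_one, probReal_univ, smul_eq_mul, one_mul]
    ring
  have h0 : 0 ≤ ∫ a, (g a - ∫ b, g b ∂ν) ^ 2 ∂ν := integral_nonneg fun a => sq_nonneg _
  rw [hexp] at h0; linarith

variable (f : (∀ i, Ω i) → ℝ)

/-- Average of `f` over the coordinates outside `s`. -/
noncomputable def avg (s : Finset (Fin N)) (x : ∀ i, Ω i) : ℝ :=
  ∫ y, f (mrg s x y) ∂(Measure.pi μ)

variable {f}

lemma stronglyMeasurable_avg (hf : Measurable f) (s : Finset (Fin N)) :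
    StronglyMeasurable (avg μ f s) :=
  (hf.comp (measurable_mrg s)).stronglyMeasurable.integral_prod_right'

lemma memℒp_avg (hf : Measurable f) (hf2 : MemLp f 2 (Measure.pi μ)) (s : Finset (Fin N)) :
    MemLp (avg μ f s) 2 (Measure.pi μ) := by
  have hcomp := memℒp_comp_mrg μ hf2 s
  have hint : Integrable (fun q : (∀ i, Ω i) × (∀ i, Ω i) => f (mrg s q.1 q.2))
      ((Measure.pi μ).prod (Measure.pi μ)) := hcomp.integrable one_le_two
  have hsq : Integrable (fun q : (∀ i, Ω i) × (∀ i, Ω i) => f (mrg s q.1 q.2) ^ 2)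
      ((Measure.pi μ).prod (Measure.pi μ)) := hcomp.integrable_sq
  rw [memLp_two_iff_integrable_sq (stronglyMeasurable_avg μ hf s).aestronglyMeasurable]
  refine Integrable.mono' hsq.integral_prod_left
    (((stronglyMeasurable_avg μ hf s).measurable.pow_const 2).aestronglyMeasurable) ?_
  filter_upwards [hint.prod_right_ae, hsq.prod_right_ae] with x h1 h2
  rw [Real.norm_eq_abs, abs_of_nonneg (sq_nonneg _)]
  exact sq_integral_le h1 h2


lemma avg_mrg_self (s : Finset (Fin N)) (x y : ∀ i, Ω i) :
    avg μ f s (mrg s x y) = avg μ f s x := by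
  simp only [avg, mrg_mrg_left]

lemma measurable_mrg_right (s : Finset (Fin N)) (x : ∀ i, Ω i) :
    Measurable fun y : ∀ i, Ω i => mrg s x y :=
  (measurable_mrg s).comp (measurable_const.prodMk measurable_id)

lemma avg_tower (hf : Measurable f) (hf2 : MemLp f 2 (Measure.pi μ))
    (t c : Finset (Fin N)) :
    ∀ᵐ x ∂(Measure.pi μ),
      ∫ y, avg μ f c (mrg t x y) ∂(Measure.pi μ) = avg μ f (t ∩ c) x := by
  have hint : Integrable (fun q : (∀ i, Ω i) × (∀ i, Ω i) => f (mrg (t ∩ c) q.1 q.2))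
      ((Measure.pi μ).prod (Measure.pi μ)) :=
    (memℒp_comp_mrg μ hf2 (t ∩ c)).integrable one_le_two
  filter_upwards [hint.prod_right_ae] with x hx
  have h1 : ∀ y, avg μ f c (mrg t x y)
      = ∫ w, f (mrg (t ∩ c) x (mrg c y w)) ∂(Measure.pi μ) := by
    intro y; simp only [avg, mrg_assoc]
  simp_rw [h1]
  have hg : Integrable (fun u => f (mrg (t ∩ c) x u)) (Measure.pi μ) := hx
  have hcomp : Integrable (fun q : (∀ i, Ω i) × (∀ i, Ω i) =>
      f (mrg (t ∩ c) x (mrg c q.1 q.2))) ((Measure.pi μ).prod (Measure.pi μ)) :=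
    ((mp_mrg μ c).integrable_comp hg.aestronglyMeasurable).mpr hg
  rw [integral_integral hcomp]
  exact integral_mrg μ c (hf.comp (measurable_mrg_right (t ∩ c) x)).aestronglyMeasurable

lemma integral_avg_mul (hf : Measurable f) (hf2 : MemLp f 2 (Measure.pi μ))
    {s t : Finset (Fin N)} (hst : s ⊆ t) :
    ∫ x, avg μ f t x * avg μ f s x ∂(Measure.pi μ)
      = ∫ x, avg μ f s x ^ 2 ∂(Measure.pi μ) := by
  have hat := memℒp_avg μ hf hf2 t
  have has := memℒp_avg μ hf hf2 s
  have hg : AEStronglyMeasurable (fun x => avg μ f t x * avg μ f s x) (Measure.pi μ) :=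
    ((stronglyMeasurable_avg μ hf t).mul (stronglyMeasurable_avg μ hf s)).aestronglyMeasurable
  rw [← integral_mrg μ s hg]
  have h1 : ∀ q : (∀ i, Ω i) × (∀ i, Ω i),
      avg μ f t (mrg s q.1 q.2) * avg μ f s (mrg s q.1 q.2)
      = avg μ f t (mrg s q.1 q.2) * avg μ f s q.1 := by
    intro q; rw [avg_mrg_self]
  simp_rw [h1]
  have hA : MemLp (fun q : (∀ i, Ω i) × (∀ i, Ω i) => avg μ f t (mrg s q.1 q.2)) 2
      ((Measure.pi μ).prod (Measure.pi μ)) := memℒp_comp_mrg μ hat s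
  have hB : MemLp (fun q : (∀ i, Ω i) × (∀ i, Ω i) => avg μ f s q.1) 2
      ((Measure.pi μ).prod (Measure.pi μ)) := has.comp_measurePreserving (mp_fst μ)
  have hAB : Integrable (fun q : (∀ i, Ω i) × (∀ i, Ω i) =>
      avg μ f t (mrg s q.1 q.2) * avg μ f s q.1) ((Measure.pi μ).prod (Measure.pi μ)) :=
    int_mul hA hB
  rw [show (∫ q : (∀ i, Ω i) × (∀ i, Ω i),
        avg μ f t (mrg s q.1 q.2) * avg μ f s q.1 ∂((Measure.pi μ).prod (Measure.pi μ)))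
      = ∫ x, ∫ y, avg μ f t (mrg s x y) * avg μ f s x ∂(Measure.pi μ) ∂(Measure.pi μ) from
    (integral_integral (f := fun x y => avg μ f t (mrg s x y) * avg μ f s x) hAB).symm]
  refine integral_congr_ae ?_
  filter_upwards [avg_tower μ hf hf2 s t] with x hx
  rw [integral_mul_const, hx, Finset.inter_eq_left.mpr hst, sq]


lemma avg_univ (x : ∀ i, Ω i) : avg μ f univ x = f x := by
  simp only [avg, mrg_univ, integral_const, measure_univ, ENNReal.toReal_one, probReal_univ, smul_eq_mul,
    one_mul]

lemma integral_f_mul_avg (hf : Measurable f) (hf2 : MemLp f 2 (Measure.pi μ))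
    (c : Finset (Fin N)) :
    ∫ x, f x * avg μ f c x ∂(Measure.pi μ) = ∫ x, avg μ f c x ^ 2 ∂(Measure.pi μ) := by
  rw [← integral_avg_mul μ hf hf2 (Finset.subset_univ c)]
  refine integral_congr_ae (Filter.Eventually.of_forall fun x => ?_)
  simp only [avg_univ]

lemma step (hf : Measurable f) (hf2 : MemLp f 2 (Measure.pi μ)) {s t : Finset (Fin N)}
    {i : Fin N} (hst : s ⊆ t) (htc : t ∩ {i}ᶜ = s) :
    ∫ x, avg μ f t x ^ 2 ∂(Measure.pi μ) - ∫ x, avg μ f s x ^ 2 ∂(Measure.pi μ)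
      ≤ ∫ x, f x ^ 2 ∂(Measure.pi μ) - ∫ x, avg μ f {i}ᶜ x ^ 2 ∂(Measure.pi μ) := by
  set c : Finset (Fin N) := {i}ᶜ with hc
  have hat := memℒp_avg μ hf hf2 t
  have has := memℒp_avg μ hf hf2 s
  have hac := memℒp_avg μ hf hf2 c
  have hh2 : MemLp (fun x => f x - avg μ f c x) 2 (Measure.pi μ) := hf2.sub hac
  have hhcomp : MemLp (fun q : (∀ i, Ω i) × (∀ i, Ω i) =>
      f (mrg t q.1 q.2) - avg μ f c (mrg t q.1 q.2)) 2
      ((Measure.pi μ).prod (Measure.pi μ)) := memℒp_comp_mrg μ hh2 t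
  have hhint := hhcomp.integrable one_le_two
  have hhsq := hhcomp.integrable_sq
  have hfc := (memℒp_comp_mrg μ hf2 t).integrable one_le_two
  have hacc := (memℒp_comp_mrg μ hac t).integrable one_le_two
  have key1 : ∀ᵐ x ∂(Measure.pi μ), (avg μ f t x - avg μ f s x) ^ 2
      ≤ ∫ y, (f (mrg t x y) - avg μ f c (mrg t x y)) ^ 2 ∂(Measure.pi μ) := by
    filter_upwards [avg_tower μ hf hf2 t c, hhint.prod_right_ae, hhsq.prod_right_ae,
      hfc.prod_right_ae, hacc.prod_right_ae] with x hx h1 h2 h3 h4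
    have hdiff : avg μ f t x - avg μ f s x
        = ∫ y, (f (mrg t x y) - avg μ f c (mrg t x y)) ∂(Measure.pi μ) := by
      rw [integral_sub h3 h4]
      congr 1
      rw [hx, htc]
    rw [hdiff]
    exact sq_integral_le h1 h2
  have hL : Integrable (fun x => (avg μ f t x - avg μ f s x) ^ 2) (Measure.pi μ) :=
    (hat.sub has).integrable_sq
  have hR : Integrable (fun x =>
      ∫ y, (f (mrg t x y) - avg μ f c (mrg t x y)) ^ 2 ∂(Measure.pi μ)) (Measure.pi μ) :=
    hhsq.integral_prod_left
  have key2 : ∫ x, (avg μ f t x - avg μ f s x) ^ 2 ∂(Measure.pi μ)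
      ≤ ∫ x, (f x - avg μ f c x) ^ 2 ∂(Measure.pi μ) := by
    calc ∫ x, (avg μ f t x - avg μ f s x) ^ 2 ∂(Measure.pi μ)
        ≤ ∫ x, ∫ y, (f (mrg t x y) - avg μ f c (mrg t x y)) ^ 2 ∂(Measure.pi μ)
            ∂(Measure.pi μ) := integral_mono_ae hL hR key1
      _ = ∫ q : (∀ i, Ω i) × (∀ i, Ω i),
            (f (mrg t q.1 q.2) - avg μ f c (mrg t q.1 q.2)) ^ 2
            ∂((Measure.pi μ).prod (Measure.pi μ)) :=
          integral_integral (f := fun x y =>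
            (f (mrg t x y) - avg μ f c (mrg t x y)) ^ 2) hhsq
      _ = ∫ x, (f x - avg μ f c x) ^ 2 ∂(Measure.pi μ) :=
          integral_mrg μ t (((hf.sub (stronglyMeasurable_avg μ hf c).measurable).pow_const
            2)).aestronglyMeasurable
  have e1 : ∫ x, (avg μ f t x - avg μ f s x) ^ 2 ∂(Measure.pi μ)
      = ∫ x, avg μ f t x ^ 2 ∂(Measure.pi μ) - ∫ x, avg μ f s x ^ 2 ∂(Measure.pi μ) := by
    have hpt : ∀ x, (avg μ f t x - avg μ f s x) ^ 2
        = avg μ f t x ^ 2 - 2 * (avg μ f t x * avg μ f s x) + avg μ f s x ^ 2 :=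
      fun x => by ring
    simp_rw [hpt]
    have hI1 : Integrable (fun x => avg μ f t x ^ 2
        - 2 * (avg μ f t x * avg μ f s x)) (Measure.pi μ) :=
      hat.integrable_sq.sub ((int_mul hat has).const_mul 2)
    rw [integral_add hI1 has.integrable_sq,
      integral_sub hat.integrable_sq ((int_mul hat has).const_mul 2), integral_const_mul,
      integral_avg_mul μ hf hf2 hst]
    ring
  have e2 : ∫ x, (f x - avg μ f c x) ^ 2 ∂(Measure.pi μ)
      = ∫ x, f x ^ 2 ∂(Measure.pi μ) - ∫ x, avg μ f c x ^ 2 ∂(Measure.pi μ) := by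
    have hpt : ∀ x, (f x - avg μ f c x) ^ 2
        = f x ^ 2 - 2 * (f x * avg μ f c x) + avg μ f c x ^ 2 := fun x => by ring
    simp_rw [hpt]
    have hI1 : Integrable (fun x => f x ^ 2 - 2 * (f x * avg μ f c x)) (Measure.pi μ) :=
      hf2.integrable_sq.sub ((int_mul hf2 hac).const_mul 2)
    rw [integral_add hI1 hac.integrable_sq,
      integral_sub hf2.integrable_sq ((int_mul hf2 hac).const_mul 2), integral_const_mul,
      integral_f_mul_avg μ hf hf2 c]
    ring
  rw [e1, e2] at key2
  exact key2

lemma rhs_term (hf : Measurable f) (hf2 : MemLp f 2 (Measure.pi μ)) (i : Fin N) :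
    ∫ p, (f p.1 - f (Function.update p.1 i (p.2 i))) ^ 2
        ∂((Measure.pi μ).prod (Measure.pi μ))
      = 2 * (∫ x, f x ^ 2 ∂(Measure.pi μ)
          - ∫ x, avg μ f ({i}ᶜ) x ^ 2 ∂(Measure.pi μ)) := by
  set c : Finset (Fin N) := {i}ᶜ with hc
  have h0 : ∀ p : (∀ i, Ω i) × (∀ i, Ω i),
      f (Function.update p.1 i (p.2 i)) = f (mrg c p.1 p.2) := fun p => by
    rw [hc, mrg_compl_single]
  simp_rw [h0]
  have hu : MemLp (fun p : (∀ i, Ω i) × (∀ i, Ω i) => f p.1) 2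
      ((Measure.pi μ).prod (Measure.pi μ)) := hf2.comp_measurePreserving (mp_fst μ)
  have hv : MemLp (fun p : (∀ i, Ω i) × (∀ i, Ω i) => f (mrg c p.1 p.2)) 2
      ((Measure.pi μ).prod (Measure.pi μ)) := memℒp_comp_mrg μ hf2 c
  have hpt : ∀ p : (∀ i, Ω i) × (∀ i, Ω i), (f p.1 - f (mrg c p.1 p.2)) ^ 2
      = f p.1 ^ 2 - 2 * (f p.1 * f (mrg c p.1 p.2)) + f (mrg c p.1 p.2) ^ 2 :=
    fun p => by ring
  simp_rw [hpt]
  have hI1 : Integrable (fun p : (∀ i, Ω i) × (∀ i, Ω i) =>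
      f p.1 ^ 2 - 2 * (f p.1 * f (mrg c p.1 p.2))) ((Measure.pi μ).prod (Measure.pi μ)) :=
    hu.integrable_sq.sub ((int_mul hu hv).const_mul 2)
  rw [integral_add hI1 hv.integrable_sq,
    integral_sub hu.integrable_sq ((int_mul hu hv).const_mul 2), integral_const_mul]
  have hA : ∫ p : (∀ i, Ω i) × (∀ i, Ω i), f p.1 ^ 2
      ∂((Measure.pi μ).prod (Measure.pi μ)) = ∫ x, f x ^ 2 ∂(Measure.pi μ) := by
    have h := integral_map (μ := (Measure.pi μ).prod (Measure.pi μ))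
      (mp_fst μ).aemeasurable (f := fun x => f x ^ 2)
      (by rw [(mp_fst μ).map_eq]; exact (hf.pow_const 2).aestronglyMeasurable)
    rw [(mp_fst μ).map_eq] at h
    exact h.symm
  have hB : ∫ p : (∀ i, Ω i) × (∀ i, Ω i), f (mrg c p.1 p.2) ^ 2
      ∂((Measure.pi μ).prod (Measure.pi μ)) = ∫ x, f x ^ 2 ∂(Measure.pi μ) :=
    integral_mrg μ c (g := fun x => f x ^ 2) (hf.pow_const 2).aestronglyMeasurable
  have hC : ∫ p : (∀ i, Ω i) × (∀ i, Ω i), f p.1 * f (mrg c p.1 p.2)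
      ∂((Measure.pi μ).prod (Measure.pi μ)) = ∫ x, avg μ f c x ^ 2 ∂(Measure.pi μ) := by
    have hint : Integrable (fun p : (∀ i, Ω i) × (∀ i, Ω i) =>
        f p.1 * f (mrg c p.1 p.2)) ((Measure.pi μ).prod (Measure.pi μ)) := int_mul hu hv
    rw [show (∫ p : (∀ i, Ω i) × (∀ i, Ω i), f p.1 * f (mrg c p.1 p.2)
          ∂((Measure.pi μ).prod (Measure.pi μ)))
        = ∫ x, ∫ y, f x * f (mrg c x y) ∂(Measure.pi μ) ∂(Measure.pi μ) from
      (integral_integral (f := fun x y => f x * f (mrg c x y)) hint).symm]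
    have hmul : ∀ x, ∫ y, f x * f (mrg c x y) ∂(Measure.pi μ) = f x * avg μ f c x :=
      fun x => integral_const_mul _ _
    simp_rw [hmul]
    exact integral_f_mul_avg μ hf hf2 c
  rw [hA, hB, hC]
  ring

end EfronStein

open EfronStein

/-- The Efron–Stein (Poincaré) inequality for product measures: if
`X₁, …, X_N` are independent random variables (represented by the product
measure `⊗ᵢ μᵢ`), `Z = f(X₁, …, X_N)` is square-integrable, and `Z⁽ⁱ⁾` is
obtained by resampling the `i`-th coordinate with an independent copy
(represented by a second independent copy of the product measure), then
`Var[Z] ≤ (1/2) Σᵢ E[(Z − Z⁽ⁱ⁾)²]`. -/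
theorem efron_stein
    {N : ℕ} {Ω : Fin N → Type*} [∀ i, MeasurableSpace (Ω i)]
    (μ : ∀ i, Measure (Ω i)) [∀ i, IsProbabilityMeasure (μ i)]
    (f : (∀ i, Ω i) → ℝ) (hf : Measurable f)
    (hf2 : MemLp f 2 (Measure.pi μ)) :
    variance f (Measure.pi μ)
      ≤ (1 / 2) * ∑ i : Fin N,
          ∫ p, (f p.1 - f (Function.update p.1 i (p.2 i))) ^ 2
            ∂((Measure.pi μ).prod (Measure.pi μ)) := by
  classical
  set a : ℕ → ℝ := fun k =>
    ∫ x, avg μ f (Finset.filter (fun j : Fin N => (j : ℕ) < k) Finset.univ) x ^ 2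
      ∂(Measure.pi μ) with ha
  have haN : a N = ∫ x, f x ^ 2 ∂(Measure.pi μ) := by
    have hfil : (Finset.filter (fun j : Fin N => (j : ℕ) < N) Finset.univ)
        = (Finset.univ : Finset (Fin N)) :=
      Finset.filter_true_of_mem fun j _ => j.isLt
    simp only [ha, hfil]
    exact integral_congr_ae (Filter.Eventually.of_forall fun x => by simp only [avg_univ])
  have ha0 : a 0 = (∫ x, f x ∂(Measure.pi μ)) ^ 2 := by
    have hfil : (Finset.filter (fun j : Fin N => (j : ℕ) < 0) Finset.univ)
        = (∅ : Finset (Fin N)) :=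
      Finset.filter_false_of_mem fun j _ => by omega
    have havg : ∀ x, avg μ f (∅ : Finset (Fin N)) x = ∫ y, f y ∂(Measure.pi μ) := by
      intro x; unfold avg; simp only [mrg_empty]
    simp only [ha, hfil, havg]
    rw [integral_const]
    simp [measure_univ]
  have htel : ∑ i : Fin N, (a ((i : ℕ) + 1) - a (i : ℕ)) = a N - a 0 := by
    rw [Fin.sum_univ_eq_sum_range (fun k => a (k + 1) - a k) N, Finset.sum_range_sub a N]
  have hterm : ∀ i : Fin N, a ((i : ℕ) + 1) - a (i : ℕ)
      ≤ ∫ x, f x ^ 2 ∂(Measure.pi μ)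
        - ∫ x, avg μ f ({i}ᶜ) x ^ 2 ∂(Measure.pi μ) := by
    intro i
    have hst : Finset.filter (fun j : Fin N => (j : ℕ) < (i : ℕ)) Finset.univ
        ⊆ Finset.filter (fun j : Fin N => (j : ℕ) < (i : ℕ) + 1) Finset.univ := by
      intro j hj
      simp only [Finset.mem_filter, Finset.mem_univ, true_and] at hj ⊢
      omega
    have htc : Finset.filter (fun j : Fin N => (j : ℕ) < (i : ℕ) + 1) Finset.univ ∩ ({i}ᶜ)
        = Finset.filter (fun j : Fin N => (j : ℕ) < (i : ℕ)) Finset.univ := by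
      ext j
      simp only [Finset.mem_inter, Finset.mem_filter, Finset.mem_univ, true_and,
        Finset.mem_compl, Finset.mem_singleton, Fin.ext_iff]
      omega
    simpa only [ha] using step μ hf hf2 hst htc
  have hvar : variance f (Measure.pi μ)
      = ∫ x, f x ^ 2 ∂(Measure.pi μ) - (∫ x, f x ∂(Measure.pi μ)) ^ 2 := by
    rw [variance_eq_sub hf2]
    simp only [Pi.pow_apply]
  have hsum : ∀ i ∈ (Finset.univ : Finset (Fin N)), a ((i : ℕ) + 1) - a (i : ℕ)
      ≤ (1 / 2) * ∫ p, (f p.1 - f (Function.update p.1 i (p.2 i))) ^ 2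
          ∂((Measure.pi μ).prod (Measure.pi μ)) := by
    intro i _
    rw [rhs_term μ hf hf2 i]
    have := hterm i
    linarith
  calc variance f (Measure.pi μ)
      = ∑ i : Fin N, (a ((i : ℕ) + 1) - a (i : ℕ)) := by rw [hvar, htel, haN, ha0]
    _ ≤ ∑ i : Fin N, (1 / 2) * ∫ p, (f p.1 - f (Function.update p.1 i (p.2 i))) ^ 2
          ∂((Measure.pi μ).prod (Measure.pi μ)) := Finset.sum_le_sum hsum
    _ = (1 / 2) * ∑ i : Fin N,
          ∫ p, (f p.1 - f (Function.update p.1 i (p.2 i))) ^ 2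
            ∂((Measure.pi μ).prod (Measure.pi μ)) := by rw [Finset.mul_sum]
end

section
/- Let X₁,…,X_N and Y₁,…,Y_N be as in the Efron–Stein setting, and let Y = g(X₁,…,X_N), Z = f(X₁,…,X_N) be square-integrable. With Y^{(i)}, Z^{(i)} denoting resampled versions in the i-th coordinate, one has Cov[Y, Z] ≤ (1/2) Σ_{i=1}^N E[(Y − Y^{(i)})²]^{1/2} · E[(Z − Z^{(i)})²]^{1/2}. -/
open MeasureTheory ProbabilityTheory Set ENNReal

namespace EfronSteinAux

variable {N : ℕ} {Ω : Fin N → Type*} [∀ i, MeasurableSpace (Ω i)]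

/-- Swap the coordinates in `q` between the two components of a pair of points. -/
def swapFn (q : Fin N → Prop) [DecidablePred q] (p : (∀ i, Ω i) × (∀ i, Ω i)) :
    (∀ i, Ω i) × (∀ i, Ω i) :=
  (fun j => if q j then p.2 j else p.1 j, fun j => if q j then p.1 j else p.2 j)

/-- Replace coordinates `< k` of `p.1` by those of `p.2`. -/
def mixFn (k : ℕ) (p : (∀ i, Ω i) × (∀ i, Ω i)) : ∀ i, Ω i :=
  fun j => if (j : ℕ) < k then p.2 j else p.1 j

lemma swapFn_involutive (q : Fin N → Prop) [DecidablePred q] :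
    Function.Involutive (swapFn (Ω := Ω) q) := by
  intro p
  refine Prod.ext ?_ ?_ <;> funext j <;> by_cases h : q j <;> simp [swapFn, h]

lemma measurable_swapFn (q : Fin N → Prop) [DecidablePred q] :
    Measurable (swapFn (Ω := Ω) q) := by
  refine Measurable.prod ?_ ?_ <;> refine measurable_pi_lambda _ fun j => ?_
  · by_cases h : q j <;> simp only [swapFn, h, if_true, if_false]
    · exact (measurable_pi_apply j).comp measurable_snd
    · exact (measurable_pi_apply j).comp measurable_fst
  · by_cases h : q j <;> simp only [swapFn, h, if_true, if_false]
    · exact (measurable_pi_apply j).comp measurable_fst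
    · exact (measurable_pi_apply j).comp measurable_snd

/-- `swapFn q` as a measurable equivalence. -/
def swapEquiv (q : Fin N → Prop) [DecidablePred q] :
    ((∀ i, Ω i) × (∀ i, Ω i)) ≃ᵐ ((∀ i, Ω i) × (∀ i, Ω i)) where
  toFun := swapFn q
  invFun := swapFn q
  left_inv := swapFn_involutive q
  right_inv := swapFn_involutive q
  measurable_toFun := measurable_swapFn q
  measurable_invFun := measurable_swapFn q

/-- The natural "unzip" measurable equivalence. -/
def unzipEquiv : (∀ i, Ω i × Ω i) ≃ᵐ ((∀ i, Ω i) × (∀ i, Ω i)) where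
  toFun a := (fun i => (a i).1, fun i => (a i).2)
  invFun p := fun i => (p.1 i, p.2 i)
  left_inv a := by funext i; rfl
  right_inv p := rfl
  measurable_toFun := by
    refine Measurable.prod ?_ ?_ <;> refine measurable_pi_lambda _ fun i => ?_
    · exact measurable_fst.comp (measurable_pi_apply i)
    · exact measurable_snd.comp (measurable_pi_apply i)
  measurable_invFun := by
    refine measurable_pi_lambda _ fun i => ?_
    exact ((measurable_pi_apply i).comp measurable_fst).prod
      ((measurable_pi_apply i).comp measurable_snd)

@[simp] lemma unzipEquiv_apply (a : ∀ i, Ω i × Ω i) :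
    unzipEquiv a = ((fun i => (a i).1, fun i => (a i).2) : ((∀ i, Ω i) × (∀ i, Ω i))) := rfl

@[simp] lemma unzipEquiv_symm_apply (p : (∀ i, Ω i) × (∀ i, Ω i)) :
    unzipEquiv.symm p = fun i => (p.1 i, p.2 i) := rfl

@[simp] lemma swapFn_fst (q : Fin N → Prop) [DecidablePred q] (p : (∀ i, Ω i) × (∀ i, Ω i)) :
    (swapFn q p).1 = fun j => if q j then p.2 j else p.1 j := rfl

@[simp] lemma swapFn_snd (q : Fin N → Prop) [DecidablePred q] (p : (∀ i, Ω i) × (∀ i, Ω i)) :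
    (swapFn q p).2 = fun j => if q j then p.1 j else p.2 j := rfl

variable (μ : ∀ i, Measure (Ω i)) [∀ i, IsProbabilityMeasure (μ i)]

lemma measurePreserving_unzip :
    MeasurePreserving (unzipEquiv (Ω := Ω))
      (Measure.pi fun i => (μ i).prod (μ i)) ((Measure.pi μ).prod (Measure.pi μ)) where
  measurable := (unzipEquiv (Ω := Ω)).measurable
  map_eq := by
    refine (Measure.FiniteSpanningSetsIn.ext ?_ (isPiSystem_pi.prod isPiSystem_pi)
      ((Measure.FiniteSpanningSetsIn.pi fun i ↦ (μ i).toFiniteSpanningSetsIn).prod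
        (Measure.FiniteSpanningSetsIn.pi fun i ↦ (μ i).toFiniteSpanningSetsIn)) ?_).symm
    · refine (generateFrom_eq_prod generateFrom_pi generateFrom_pi ?_ ?_).symm
      · exact (Measure.FiniteSpanningSetsIn.pi fun i ↦
          (μ i).toFiniteSpanningSetsIn).isCountablySpanning
      · exact (Measure.FiniteSpanningSetsIn.pi fun i ↦
          (μ i).toFiniteSpanningSetsIn).isCountablySpanning
    · rintro _ ⟨s, ⟨s, _, rfl⟩, ⟨_, ⟨t, _, rfl⟩, rfl⟩⟩
      rw [MeasurableEquiv.map_apply]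
      rw [show (unzipEquiv (Ω := Ω)) ⁻¹' (univ.pi s ×ˢ univ.pi t) =
          univ.pi fun i ↦ s i ×ˢ t i by
        ext a
        constructor
        · rintro ⟨h1, h2⟩ i -
          exact ⟨h1 i trivial, h2 i trivial⟩
        · intro h
          exact ⟨fun i _ => (h i trivial).1, fun i _ => (h i trivial).2⟩]
      rw [Measure.prod_prod, Measure.pi_pi, Measure.pi_pi, Measure.pi_pi]
      simp_rw [Measure.prod_prod]
      rw [Finset.prod_mul_distrib]

lemma measurePreserving_swapFn (q : Fin N → Prop) [DecidablePred q] :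
    MeasurePreserving (swapFn (Ω := Ω) q)
      ((Measure.pi μ).prod (Measure.pi μ)) ((Measure.pi μ).prod (Measure.pi μ)) := by
  have h1 := measurePreserving_unzip μ
  have h2 : MeasurePreserving
      (fun (a : ∀ i, Ω i × Ω i) (i : Fin N) => if q i then Prod.swap (a i) else a i)
      (Measure.pi fun i => (μ i).prod (μ i)) (Measure.pi fun i => (μ i).prod (μ i)) := by
    refine measurePreserving_pi (fun i => (μ i).prod (μ i)) (fun i => (μ i).prod (μ i))
      (f := fun i x => if q i then Prod.swap x else x) fun i => ?_
    by_cases h : q i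
    · simpa [h] using Measure.measurePreserving_swap (μ := μ i) (ν := μ i)
    · simp only [h, if_false]; exact MeasurePreserving.id ((μ i).prod (μ i))
  have h3 := h1.symm (unzipEquiv (Ω := Ω))
  have hcomp := (h1.comp h2).comp h3
  have hfun : ((⇑(unzipEquiv (Ω := Ω)) ∘
      (fun (a : ∀ i, Ω i × Ω i) (i : Fin N) => if q i then Prod.swap (a i) else a i)) ∘
      ⇑(unzipEquiv (Ω := Ω)).symm) = swapFn (Ω := Ω) q := by
    funext p
    refine Prod.ext ?_ ?_ <;> funext j <;> by_cases h : q j <;>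
      simp [swapFn, h, Function.comp]
  rwa [hfun] at hcomp

lemma integral_swapFn (q : Fin N → Prop) [DecidablePred q] (G : ((∀ i, Ω i) × (∀ i, Ω i)) → ℝ) :
    ∫ p, G (swapFn q p) ∂((Measure.pi μ).prod (Measure.pi μ))
      = ∫ p, G p ∂((Measure.pi μ).prod (Measure.pi μ)) :=
  (measurePreserving_swapFn μ q).integral_comp (swapEquiv q).measurableEmbedding G

lemma memL2_fst {h : (∀ i, Ω i) → ℝ} (h2 : MemLp h 2 (Measure.pi μ)) :
    MemLp (fun p : (∀ i, Ω i) × (∀ i, Ω i) => h p.1) 2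
      ((Measure.pi μ).prod (Measure.pi μ)) := by
  have hmap : Measure.map Prod.fst ((Measure.pi μ).prod (Measure.pi μ)) = Measure.pi μ := by
    rw [Measure.map_fst_prod]; simp
  refine (memLp_map_measure_iff ?_ measurable_fst.aemeasurable).mp ?_ <;> rw [hmap]
  exacts [h2.1, h2]

lemma memL2_comp_swapFn (q : Fin N → Prop) [DecidablePred q]
    {w : ((∀ i, Ω i) × (∀ i, Ω i)) → ℝ}
    (h2 : MemLp w 2 ((Measure.pi μ).prod (Measure.pi μ))) :
    MemLp (fun p => w (swapFn q p)) 2 ((Measure.pi μ).prod (Measure.pi μ)) := by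
  have hmap := (measurePreserving_swapFn μ q).map_eq
  refine (memLp_map_measure_iff ?_ (measurable_swapFn q).aemeasurable).mp ?_ <;> rw [hmap]
  exacts [h2.1, h2]

lemma integrable_mul_L2 {α : Type*} [MeasurableSpace α] {m : Measure α} {u v : α → ℝ}
    (hu : MemLp u 2 m) (hv : MemLp v 2 m) :
    Integrable (fun x => u x * v x) m := by
  have hpqr : (1 : ℝ≥0∞) / 1 = 1 / 2 + 1 / 2 := by
    rw [ENNReal.add_halves]; norm_num
  have h := hv.smul (r := 1) hu
  rw [← memLp_one_iff_integrable]
  exact h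

lemma integral_mul_le_sqrt {α : Type*} [MeasurableSpace α] {m : Measure α} {u v : α → ℝ}
    (hu : MemLp u 2 m) (hv : MemLp v 2 m) :
    ∫ x, u x * v x ∂m
      ≤ Real.sqrt (∫ x, u x ^ 2 ∂m) * Real.sqrt (∫ x, v x ^ 2 ∂m) := by
  have huv : Integrable (fun x => u x * v x) m := integrable_mul_L2 hu hv
  have habs : Integrable (fun x => ‖u x‖ * ‖v x‖) m := by
    simpa [Real.norm_eq_abs, abs_mul] using huv.abs
  have h1 : ∫ x, u x * v x ∂m ≤ ∫ x, ‖u x‖ * ‖v x‖ ∂m := by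
    refine integral_mono huv habs fun x => ?_
    calc u x * v x ≤ |u x * v x| := le_abs_self _
      _ = ‖u x‖ * ‖v x‖ := by rw [abs_mul]; rfl
  have hconj : (2 : ℝ).HolderConjugate 2 := Real.HolderConjugate.two_two
  have h2 := integral_mul_norm_le_Lp_mul_Lq hconj
    (f := u) (g := v) (μ := m) (by rwa [ENNReal.ofReal_ofNat]) (by rwa [ENNReal.ofReal_ofNat])
  have hsq : ∀ w : α → ℝ, ∫ x, ‖w x‖ ^ (2 : ℝ) ∂m = ∫ x, w x ^ 2 ∂m := by
    intro w
    refine integral_congr_ae (Filter.Eventually.of_forall fun x => ?_)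
    show ‖w x‖ ^ (2 : ℝ) = w x ^ 2
    rw [show ((2 : ℝ)) = ((2 : ℕ) : ℝ) by norm_num, Real.rpow_natCast, Real.norm_eq_abs, sq_abs]
  rw [hsq u, hsq v] at h2
  rw [Real.sqrt_eq_rpow, Real.sqrt_eq_rpow]
  exact h1.trans h2

lemma step (f g : (∀ i, Ω i) → ℝ)
    (hf2 : MemLp f 2 (Measure.pi μ)) (hg2 : MemLp g 2 (Measure.pi μ)) (i : Fin N) :
    (∫ p, g p.1 * f (mixFn i.val p) ∂((Measure.pi μ).prod (Measure.pi μ)))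
      - (∫ p, g p.1 * f (mixFn (i.val + 1) p) ∂((Measure.pi μ).prod (Measure.pi μ)))
      ≤ (1 / 2) *
        (Real.sqrt (∫ p, (g p.1 - g (Function.update p.1 i (p.2 i))) ^ 2
            ∂((Measure.pi μ).prod (Measure.pi μ)))
        * Real.sqrt (∫ p, (f p.1 - f (Function.update p.1 i (p.2 i))) ^ 2
            ∂((Measure.pi μ).prod (Measure.pi μ)))) := by
  set ν := (Measure.pi μ).prod (Measure.pi μ) with hνdef
  have hg1 : MemLp (fun p : (∀ i, Ω i) × (∀ i, Ω i) => g p.1) 2 ν := memL2_fst μ hg2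
  have hf1 : MemLp (fun p : (∀ i, Ω i) × (∀ i, Ω i) => f p.1) 2 ν := memL2_fst μ hf2
  have hfk : ∀ k : ℕ, MemLp (fun p => f (mixFn k p)) 2 ν := fun k =>
    memL2_comp_swapFn μ (fun j => (j : ℕ) < k) hf1
  -- pointwise coordinate identities
  have e1 : ∀ p : (∀ i, Ω i) × (∀ i, Ω i),
      (swapFn (fun j => j = i) p).1 = Function.update p.1 i (p.2 i) := by
    intro p; funext j
    by_cases hj : j = i
    · subst hj; simp
    · simp [hj, Function.update_of_ne hj]
  have e2 : ∀ p : (∀ i, Ω i) × (∀ i, Ω i),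
      mixFn i.val (swapFn (fun j => j = i) p) = mixFn (i.val + 1) p := by
    intro p; funext j
    rcases eq_or_ne j i with hj | hj
    · subst hj; simp [mixFn, Nat.lt_succ_self]
    · by_cases hlt : (j : ℕ) < (i : ℕ)
      · simp [mixFn, hj, hlt, Nat.lt_succ_of_lt hlt]
      · have hv : (j : ℕ) ≠ (i : ℕ) := fun h => hj (Fin.ext h)
        have h2 : ¬ (j : ℕ) < (i : ℕ) + 1 := by omega
        simp [mixFn, hj, hlt, h2]
  have e3 : ∀ p : (∀ i, Ω i) × (∀ i, Ω i),
      mixFn (i.val + 1) (swapFn (fun j => j = i) p) = mixFn i.val p := by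
    intro p; funext j
    rcases eq_or_ne j i with hj | hj
    · subst hj; simp [mixFn, Nat.lt_succ_self]
    · by_cases hlt : (j : ℕ) < (i : ℕ)
      · simp [mixFn, hj, hlt, Nat.lt_succ_of_lt hlt]
      · have hv : (j : ℕ) ≠ (i : ℕ) := fun h => hj (Fin.ext h)
        have h2 : ¬ (j : ℕ) < (i : ℕ) + 1 := by omega
        simp [mixFn, hj, hlt, h2]
  have e4 : ∀ p : (∀ i, Ω i) × (∀ i, Ω i),
      Function.update (mixFn i.val p) i (p.2 i) = mixFn (i.val + 1) p := by
    intro p; funext j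
    rcases eq_or_ne j i with hj | hj
    · subst hj; simp [mixFn, Nat.lt_succ_self]
    · by_cases hlt : (j : ℕ) < (i : ℕ)
      · simp [Function.update_of_ne hj, mixFn, hlt, Nat.lt_succ_of_lt hlt]
      · have hv : (j : ℕ) ≠ (i : ℕ) := fun h => hj (Fin.ext h)
        have h2 : ¬ (j : ℕ) < (i : ℕ) + 1 := by omega
        simp [Function.update_of_ne hj, mixFn, hlt, h2]
  have e5 : ∀ p : (∀ i, Ω i) × (∀ i, Ω i),
      (swapFn (fun j => (j : ℕ) < (i : ℕ)) p).1 = mixFn i.val p := fun p => rfl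
  have e6 : ∀ p : (∀ i, Ω i) × (∀ i, Ω i),
      (swapFn (fun j => (j : ℕ) < (i : ℕ)) p).2 i = p.2 i := by
    intro p; simp
  have hgU : MemLp (fun p : (∀ i, Ω i) × (∀ i, Ω i) =>
      g (Function.update p.1 i (p.2 i))) 2 ν := by
    have h := memL2_comp_swapFn μ (fun j => j = i) hg1
    simpa only [e1] using h
  -- integrability of the products
  have hgfk : ∀ k : ℕ, Integrable (fun p => g p.1 * f (mixFn k p)) ν := fun k =>
    integrable_mul_L2 hg1 (hfk k)
  have hgUfk : ∀ k : ℕ, Integrable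
      (fun p => g (Function.update p.1 i (p.2 i)) * f (mixFn k p)) ν := fun k =>
    integrable_mul_L2 hgU (hfk k)
  have IΔ : Integrable
      (fun p => g p.1 * (f (mixFn i.val p) - f (mixFn (i.val + 1) p))) ν := by
    have h := (hgfk i.val).sub (hgfk (i.val + 1))
    simpa [mul_sub, Pi.sub_def] using h
  have JΔ : Integrable (fun p => g (Function.update p.1 i (p.2 i)) *
      (f (mixFn i.val p) - f (mixFn (i.val + 1) p))) ν := by
    have h := (hgUfk i.val).sub (hgUfk (i.val + 1))
    simpa [mul_sub, Pi.sub_def] using h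
  have hsub : (∫ p, g p.1 * f (mixFn i.val p) ∂ν)
      - (∫ p, g p.1 * f (mixFn (i.val + 1) p) ∂ν)
      = ∫ p, g p.1 * (f (mixFn i.val p) - f (mixFn (i.val + 1) p)) ∂ν := by
    rw [← integral_sub (hgfk i.val) (hgfk (i.val + 1))]
    simp_rw [mul_sub]
  -- symmetrization
  have hkey : ∫ x, g (Function.update x.1 i (x.2 i)) *
        (f (mixFn i.val x) - f (mixFn (i.val + 1) x)) ∂ν
      = - ∫ p, g p.1 * (f (mixFn i.val p) - f (mixFn (i.val + 1) p)) ∂ν := by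
    have hswap := integral_swapFn μ (fun j => j = i)
      (fun p => g p.1 * (f (mixFn i.val p) - f (mixFn (i.val + 1) p)))
    rw [← hswap, ← integral_neg]
    refine integral_congr_ae (Filter.Eventually.of_forall fun x => ?_)
    simp only [e1, e2, e3]
    ring
  have h2I : ∫ x, (g x.1 - g (Function.update x.1 i (x.2 i))) *
        (f (mixFn i.val x) - f (mixFn (i.val + 1) x)) ∂ν
      = 2 * ∫ p, g p.1 * (f (mixFn i.val p) - f (mixFn (i.val + 1) p)) ∂ν := by
    have hfe : (fun x : (∀ i, Ω i) × (∀ i, Ω i) =>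
        (g x.1 - g (Function.update x.1 i (x.2 i))) *
          (f (mixFn i.val x) - f (mixFn (i.val + 1) x)))
        = fun x => g x.1 * (f (mixFn i.val x) - f (mixFn (i.val + 1) x))
          - g (Function.update x.1 i (x.2 i)) *
            (f (mixFn i.val x) - f (mixFn (i.val + 1) x)) := by
      funext x; ring
    rw [hfe, integral_sub IΔ JΔ, hkey]
    ring
  -- Cauchy-Schwarz
  have hu2 : MemLp (fun x : (∀ i, Ω i) × (∀ i, Ω i) =>
      g x.1 - g (Function.update x.1 i (x.2 i))) 2 ν := hg1.sub hgU
  have hv2 : MemLp (fun x => f (mixFn i.val x) - f (mixFn (i.val + 1) x)) 2 ν :=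
    (hfk i.val).sub (hfk (i.val + 1))
  have hCS := integral_mul_le_sqrt hu2 hv2
  -- identify the second factor
  have hΔsq : ∫ x, (f (mixFn i.val x) - f (mixFn (i.val + 1) x)) ^ 2 ∂ν
      = ∫ p, (f p.1 - f (Function.update p.1 i (p.2 i))) ^ 2 ∂ν := by
    have hswap2 := integral_swapFn μ (fun j => (j : ℕ) < (i : ℕ))
      (fun p => (f p.1 - f (Function.update p.1 i (p.2 i))) ^ 2)
    rw [← hswap2]
    refine integral_congr_ae (Filter.Eventually.of_forall fun x => ?_)
    simp only [e6, e5, e4]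
  rw [hΔsq] at hCS
  rw [hsub]
  linarith [hCS, h2I]

theorem main
    (f g : (∀ i, Ω i) → ℝ)
    (hf2 : MemLp f 2 (Measure.pi μ)) (hg2 : MemLp g 2 (Measure.pi μ)) :
    (∫ x, g x * f x ∂(Measure.pi μ))
        - (∫ x, g x ∂(Measure.pi μ)) * (∫ x, f x ∂(Measure.pi μ))
      ≤ (1 / 2) * ∑ i : Fin N,
          Real.sqrt (∫ p, (g p.1 - g (Function.update p.1 i (p.2 i))) ^ 2
              ∂((Measure.pi μ).prod (Measure.pi μ)))
          * Real.sqrt (∫ p, (f p.1 - f (Function.update p.1 i (p.2 i))) ^ 2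
              ∂((Measure.pi μ).prod (Measure.pi μ))) := by
  have hA0 : ∫ x, g x * f x ∂(Measure.pi μ)
      = ∫ p, g p.1 * f (mixFn 0 p) ∂((Measure.pi μ).prod (Measure.pi μ)) := by
    have h1 : ∀ p : (∀ i, Ω i) × (∀ i, Ω i), mixFn (Ω := Ω) 0 p = p.1 := by
      intro p; funext j; simp [mixFn]
    have hprod := integral_prod_mul (μ := Measure.pi μ) (ν := Measure.pi μ)
      (fun x => g x * f x) (fun _ => (1 : ℝ))
    have hre : ∫ p, (fun x => g x * f x) p.1 * (fun _ => (1 : ℝ)) p.2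
          ∂((Measure.pi μ).prod (Measure.pi μ))
        = ∫ p, g p.1 * f (mixFn 0 p) ∂((Measure.pi μ).prod (Measure.pi μ)) := by
      refine integral_congr_ae (Filter.Eventually.of_forall fun p => ?_)
      simp [h1]
    rw [← hre, hprod]
    simp
  have hAN : ∫ p, g p.1 * f (mixFn N p) ∂((Measure.pi μ).prod (Measure.pi μ))
      = (∫ x, g x ∂(Measure.pi μ)) * ∫ x, f x ∂(Measure.pi μ) := by
    have h1 : ∀ p : (∀ i, Ω i) × (∀ i, Ω i), mixFn (Ω := Ω) N p = p.2 := by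
      intro p; funext j; simp [mixFn, j.isLt]
    have hre : ∫ p, g p.1 * f (mixFn N p) ∂((Measure.pi μ).prod (Measure.pi μ))
        = ∫ p, g p.1 * f p.2 ∂((Measure.pi μ).prod (Measure.pi μ)) := by
      refine integral_congr_ae (Filter.Eventually.of_forall fun p => ?_)
      simp [h1]
    rw [hre]
    exact integral_prod_mul g f
  have htel : (∫ x, g x * f x ∂(Measure.pi μ))
        - (∫ x, g x ∂(Measure.pi μ)) * (∫ x, f x ∂(Measure.pi μ))
      = ∑ k ∈ Finset.range N,
          ((∫ p, g p.1 * f (mixFn k p) ∂((Measure.pi μ).prod (Measure.pi μ)))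
            - ∫ p, g p.1 * f (mixFn (k + 1) p) ∂((Measure.pi μ).prod (Measure.pi μ))) := by
    rw [Finset.sum_range_sub'
      (fun k => ∫ p, g p.1 * f (mixFn k p) ∂((Measure.pi μ).prod (Measure.pi μ))) N,
      hA0, ← hAN]
  rw [htel, ← Fin.sum_univ_eq_sum_range
    (fun k => (∫ p, g p.1 * f (mixFn k p) ∂((Measure.pi μ).prod (Measure.pi μ)))
      - ∫ p, g p.1 * f (mixFn (k + 1) p) ∂((Measure.pi μ).prod (Measure.pi μ))) N,
    Finset.mul_sum]
  refine Finset.sum_le_sum fun i _ => ?_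
  exact step μ f g hf2 hg2 i

end EfronSteinAux



open MeasureTheory ProbabilityTheory

/-- Covariance version of the Efron–Stein inequality: with `X₁, …, X_N`
independent (represented by the product measure `⊗ᵢ μᵢ`), resampled versions
`Y⁽ⁱ⁾, Z⁽ⁱ⁾` obtained by replacing the `i`-th coordinate with an independent
copy, and `Y = g(X), Z = f(X)` square-integrable,
`Cov[Y, Z] ≤ (1/2) Σᵢ E[(Y − Y⁽ⁱ⁾)²]^{1/2} E[(Z − Z⁽ⁱ⁾)²]^{1/2}`. -/
theorem efron_stein_covariance
    {N : ℕ} {Ω : Fin N → Type*} [∀ i, MeasurableSpace (Ω i)]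
    (μ : ∀ i, Measure (Ω i)) [∀ i, IsProbabilityMeasure (μ i)]
    (f g : (∀ i, Ω i) → ℝ) (hf : Measurable f) (hg : Measurable g)
    (hf2 : MemLp f 2 (Measure.pi μ)) (hg2 : MemLp g 2 (Measure.pi μ)) :
    (∫ x, g x * f x ∂(Measure.pi μ))
        - (∫ x, g x ∂(Measure.pi μ)) * (∫ x, f x ∂(Measure.pi μ))
      ≤ (1 / 2) * ∑ i : Fin N,
          Real.sqrt (∫ p, (g p.1 - g (Function.update p.1 i (p.2 i))) ^ 2
              ∂((Measure.pi μ).prod (Measure.pi μ)))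
          * Real.sqrt (∫ p, (f p.1 - f (Function.update p.1 i (p.2 i))) ^ 2
              ∂((Measure.pi μ).prod (Measure.pi μ))) := by
  exact EfronSteinAux.main μ f g hf2 hg2
end

section
/- Let Z ∈ L²(Ω) and let (ℱ_n)_{n≥0} be a filtration with ℱ_0 trivial and Z measurable with respect to σ(⋃_n ℱ_n). Then for square-integrable Y, Z, |Cov[Y, Z]| ≤ Σ_{k=1}^∞ E[ |Cov_k[E[Y|ℱ_k]; E[Z|ℱ_k]]| ], where Cov_k[U;V] := E[UV | 𝒢_k] − E[U|𝒢_k]·E[V|𝒢_k] and 𝒢_k is a σ-algebra such that E[·|𝒢_k]∘E[·|ℱ_k] = E[·|ℱ_{k−1}] on L². -/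
open MeasureTheory ProbabilityTheory Filter Topology

section Aux

variable {Ω : Type*} {m0 : MeasurableSpace Ω} {P : Measure Ω} [IsProbabilityMeasure P]

private lemma abs_mul_le_half (x y : ℝ) : |x * y| ≤ (x ^ 2 + y ^ 2) / 2 := by
  rw [abs_mul]
  have hxy := two_mul_le_add_sq |x| |y|
  rw [sq_abs, sq_abs] at hxy
  nlinarith [abs_nonneg x, abs_nonneg y]

private lemma l2_mul_integrable {f g : Ω → ℝ} (hf : MemLp f 2 P) (hg : MemLp g 2 P) :
    Integrable (fun ω => f ω * g ω) P := by
  have h : MemLp (g • f) 1 P := hf.smul hg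
    (hpqr := ⟨by simp [one_div, ENNReal.inv_two_add_inv_two]⟩)
  have h2 := h.integrable le_rfl
  have h3 : (g • f) = fun ω => f ω * g ω := by
    funext ω; simp [mul_comm]
  rwa [h3] at h2

end Aux

private lemma memL2_condexp {Ω : Type*} {m m0 : MeasurableSpace Ω} (hm : m ≤ m0)
    {P : Measure Ω} [IsProbabilityMeasure P] {W : Ω → ℝ}
    (hW : MemLp W 2 P) : MemLp (P[W|m]) 2 P := by
  have hWi : Integrable W P := hW.integrable one_le_two
  set f : Lp ℝ 2 P := hW.toLp W with hf
  have hfW : (f : Ω → ℝ) =ᵐ[P] W := hW.coeFn_toLp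
  have hcond : (condExpL2 ℝ ℝ hm f : Ω → ℝ) =ᵐ[P] P[W|m] := by
    refine ae_eq_condExp_of_forall_setIntegral_eq hm hWi ?_ ?_ ?_
    · intro s _ _
      exact (integrable_condExpL2_of_isFiniteMeasure hm).integrableOn
    · intro s hs hμs
      rw [integral_condExpL2_eq hm f hs hμs.ne]
      exact setIntegral_congr_ae (hm s hs) (hfW.mono fun x hx _ => hx)
    · exact aestronglyMeasurable_condExpL2 hm f
  have hmem : MemLp (condExpL2 ℝ ℝ hm f : Ω → ℝ) 2 P := Lp.memLp _
  exact hmem.ae_eq hcond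

section Aux2

variable {Ω : Type*} {m0 : MeasurableSpace Ω} {P : Measure Ω} [IsProbabilityMeasure P]

private lemma integral_mul_condexp_eq {m : MeasurableSpace Ω} (hm : m ≤ m0) {g W : Ω → ℝ}
    (hgm : StronglyMeasurable[m] g) (hg : MemLp g 2 P) (hW : MemLp W 2 P) :
    ∫ ω, g ω * W ω ∂P = ∫ ω, g ω * (P[W|m]) ω ∂P := by
  have h1 : Integrable (g * W) P := l2_mul_integrable hg hW
  have h2 := condExp_mul_of_stronglyMeasurable_left hgm h1 (hW.integrable one_le_two)
  calc ∫ ω, g ω * W ω ∂P = ∫ ω, (P[g * W|m]) ω ∂P := (integral_condExp hm).symm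
    _ = ∫ ω, (g * (P[W|m])) ω ∂P := integral_congr_ae h2
    _ = ∫ ω, g ω * (P[W|m]) ω ∂P := rfl

private lemma pythagoras {m : MeasurableSpace Ω} (hm : m ≤ m0) {W : Ω → ℝ}
    (hW : MemLp W 2 P) :
    ∫ ω, (W ω - (P[W|m]) ω) ^ 2 ∂P
      = (∫ ω, (W ω) ^ 2 ∂P) - ∫ ω, ((P[W|m]) ω) ^ 2 ∂P := by
  set g := P[W|m] with hgdef
  have hg : MemLp g 2 P := memL2_condexp hm hW
  have hgm : StronglyMeasurable[m] g := stronglyMeasurable_condExp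
  have hWg : ∫ ω, g ω * W ω ∂P = ∫ ω, g ω * g ω ∂P := by
    rw [integral_mul_condexp_eq hm hgm hg hW]
  have hgg : ∫ ω, g ω * g ω ∂P = ∫ ω, (g ω) ^ 2 ∂P := by
    congr 1; funext ω; ring
  have hW2 : Integrable (fun ω => (W ω) ^ 2) P := hW.integrable_sq
  have hg2 : Integrable (fun ω => (g ω) ^ 2) P := hg.integrable_sq
  have hgW : Integrable (fun ω => g ω * W ω) P := l2_mul_integrable hg hW
  have hexp : (fun ω => (W ω - g ω) ^ 2)
      = fun ω => ((W ω) ^ 2 - 2 * (g ω * W ω)) + (g ω) ^ 2 := by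
    funext ω; ring
  have hsub : Integrable (fun ω => (W ω) ^ 2 - 2 * (g ω * W ω)) P :=
    hW2.sub (hgW.const_mul 2)
  have h3 : ∫ ω, (W ω - g ω) ^ 2 ∂P
      = ((∫ ω, (W ω) ^ 2 ∂P) - 2 * ∫ ω, g ω * W ω ∂P) + ∫ ω, (g ω) ^ 2 ∂P := by
    rw [hexp, integral_add hsub hg2, integral_sub hW2 (hgW.const_mul 2), integral_const_mul]
  rw [h3, hWg, hgg]; ring

end Aux2

/-- Martingale (Lu–Yau) telescoping decomposition of the covariance: given a
filtration `(ℱ_n)` with `ℱ_0` trivial, σ-algebras `𝒢_k` satisfying the tower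
property `E[E[·|ℱ_k]|𝒢_k] = E[·|ℱ_{k−1}]` on L², and `Z` measurable with
respect to `σ(⋃ₙ ℱ_n)`, one has
`|Cov[Y,Z]| ≤ Σ_{k≥1} E[|Cov_k[E[Y|ℱ_k]; E[Z|ℱ_k]]|]` where
`Cov_k[U;V] = E[UV|𝒢_k] − E[U|𝒢_k]E[V|𝒢_k]`. -/
theorem covariance_martingale_telescoping
    {Ω : Type*} [m0 : MeasurableSpace Ω] (P : Measure Ω) [IsProbabilityMeasure P]
    (ℱ 𝒢 : ℕ → MeasurableSpace Ω)
    (hℱle : ∀ n, ℱ n ≤ m0) (hℱmono : Monotone ℱ) (hℱ0 : ℱ 0 = ⊥)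
    (h𝒢le : ∀ n, 𝒢 n ≤ m0)
    (htower : ∀ k : ℕ, 1 ≤ k → ∀ W : Ω → ℝ, MemLp W 2 P →
      P[ (P[W | ℱ k]) | 𝒢 k] =ᵐ[P] P[W | ℱ (k - 1)])
    (Y Z : Ω → ℝ) (hY : MemLp Y 2 P) (hZ : MemLp Z 2 P)
    (hZmeas : Measurable[⨆ n, ℱ n] Z) :
    |(∫ ω, Y ω * Z ω ∂P) - (∫ ω, Y ω ∂P) * (∫ ω, Z ω ∂P)|
      ≤ ∑' k : ℕ,
          ∫ ω, |(P[fun ω' => (P[Y | ℱ (k + 1)]) ω' * (P[Z | ℱ (k + 1)]) ω' | 𝒢 (k + 1)]) ω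
              - (P[ (P[Y | ℱ (k + 1)]) | 𝒢 (k + 1)]) ω
                * (P[ (P[Z | ℱ (k + 1)]) | 𝒢 (k + 1)]) ω| ∂P := by
  classical
  set U : ℕ → Ω → ℝ := fun k => P[Y | ℱ k] with hUdef
  set V : ℕ → Ω → ℝ := fun k => P[Z | ℱ k] with hVdef
  have hUL2 : ∀ k, MemLp (U k) 2 P := fun k => memL2_condexp (hℱle k) hY
  have hVL2 : ∀ k, MemLp (V k) 2 P := fun k => memL2_condexp (hℱle k) hZ
  have hUm : ∀ k, StronglyMeasurable[ℱ k] (U k) := fun _ => stronglyMeasurable_condExp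
  have hVm : ∀ k, StronglyMeasurable[ℱ k] (V k) := fun _ => stronglyMeasurable_condExp
  set u : ℕ → Ω → ℝ := fun k => P[U (k + 1) | 𝒢 (k + 1)] with hudef
  set v : ℕ → Ω → ℝ := fun k => P[V (k + 1) | 𝒢 (k + 1)] with hvdef
  have hu2 : ∀ k, MemLp (u k) 2 P := fun k => memL2_condexp (h𝒢le _) (hUL2 _)
  have hv2 : ∀ k, MemLp (v k) 2 P := fun k => memL2_condexp (h𝒢le _) (hVL2 _)
  have htY : ∀ k, u k =ᵐ[P] U k := fun k => htower (k + 1) (Nat.le_add_left 1 k) Y hY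
  have htZ : ∀ k, v k =ᵐ[P] V k := fun k => htower (k + 1) (Nat.le_add_left 1 k) Z hZ
  set Cov : ℕ → Ω → ℝ := fun k ω =>
    (P[fun ω' => U (k + 1) ω' * V (k + 1) ω' | 𝒢 (k + 1)]) ω - u k ω * v k ω with hCovdef
  set term : ℕ → ℝ := fun k => ∫ ω, |Cov k ω| ∂P with htermdef
  set a : ℕ → ℝ := fun k => ∫ ω, U k ω * V k ω ∂P with hadef
  set bY : ℕ → ℝ := fun k => ∫ ω, (U k ω) ^ 2 ∂P with hbYdef
  set bZ : ℕ → ℝ := fun k => ∫ ω, (V k ω) ^ 2 ∂P with hbZdef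
  -- value at 0
  have ha0 : a 0 = (∫ ω, Y ω ∂P) * (∫ ω, Z ω ∂P) := by
    have hU0 : U 0 = fun _ => ∫ ω, Y ω ∂P := by rw [hUdef]; simp only [hℱ0, condExp_bot]
    have hV0 : V 0 = fun _ => ∫ ω, Z ω ∂P := by rw [hVdef]; simp only [hℱ0, condExp_bot]
    rw [hadef]; simp only [hU0, hV0]
    simp
  -- telescoping increments
  have hdiff : ∀ k, a (k + 1) - a k = ∫ ω, Cov k ω ∂P := by
    intro k
    have h2 : Integrable (fun ω => u k ω * v k ω) P := l2_mul_integrable (hu2 k) (hv2 k)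
    have hint : ∫ ω, Cov k ω ∂P
        = (∫ ω, (P[fun ω' => U (k + 1) ω' * V (k + 1) ω' | 𝒢 (k + 1)]) ω ∂P)
          - ∫ ω, u k ω * v k ω ∂P :=
      integral_sub integrable_condExp h2
    rw [hint, integral_condExp (h𝒢le _)]
    have h3 : ∫ ω, u k ω * v k ω ∂P = ∫ ω, U k ω * V k ω ∂P :=
      integral_congr_ae ((htY k).mul (htZ k))
    rw [h3]
  have habs : ∀ k, |a (k + 1) - a k| ≤ term k := by
    intro k
    rw [hdiff k]
    simpa [Real.norm_eq_abs] using
      norm_integral_le_integral_norm (μ := P) (f := fun ω => Cov k ω)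
  -- partial-sum bound
  have hparts : ∀ N, |a N - a 0| ≤ ∑ k ∈ Finset.range N, term k := by
    intro N
    have h1 : a N - a 0 = ∑ k ∈ Finset.range N, (a (k + 1) - a k) :=
      (Finset.sum_range_sub a N).symm
    rw [h1]
    exact (Finset.abs_sum_le_sum_abs _ _).trans (Finset.sum_le_sum fun k _ => habs k)
  -- increments of the energies
  have hdY : ∀ k, ∫ ω, (U (k + 1) ω - u k ω) ^ 2 ∂P = bY (k + 1) - bY k := by
    intro k
    have h := pythagoras (P := P) (h𝒢le (k + 1)) (hUL2 (k + 1))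
    have h2 : ∫ ω, (u k ω) ^ 2 ∂P = bY k := by
      refine integral_congr_ae ((htY k).mono fun ω hω => ?_)
      dsimp only
      rw [hω]
    rw [← h2]
    exact h
  have hdZ : ∀ k, ∫ ω, (V (k + 1) ω - v k ω) ^ 2 ∂P = bZ (k + 1) - bZ k := by
    intro k
    have h := pythagoras (P := P) (h𝒢le (k + 1)) (hVL2 (k + 1))
    have h2 : ∫ ω, (v k ω) ^ 2 ∂P = bZ k := by
      refine integral_congr_ae ((htZ k).mono fun ω hω => ?_)
      dsimp only
      rw [hω]
    rw [← h2]
    exact h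
  have hdYnn : ∀ k, 0 ≤ bY (k + 1) - bY k := by
    intro k; rw [← hdY k]; exact integral_nonneg fun ω => sq_nonneg _
  have hdZnn : ∀ k, 0 ≤ bZ (k + 1) - bZ k := by
    intro k; rw [← hdZ k]; exact integral_nonneg fun ω => sq_nonneg _
  have hbYle : ∀ N, bY N ≤ ∫ ω, (Y ω) ^ 2 ∂P := by
    intro N
    have h := pythagoras (P := P) (hℱle N) hY
    have h0 : 0 ≤ ∫ ω, (Y ω - U N ω) ^ 2 ∂P := integral_nonneg fun ω => sq_nonneg _
    rw [h] at h0; linarith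
  have hbZle : ∀ N, bZ N ≤ ∫ ω, (Z ω) ^ 2 ∂P := by
    intro N
    have h := pythagoras (P := P) (hℱle N) hZ
    have h0 : 0 ≤ ∫ ω, (Z ω - V N ω) ^ 2 ∂P := integral_nonneg fun ω => sq_nonneg _
    rw [h] at h0; linarith
  -- key bound on the covariance term
  have htermle : ∀ k, term k ≤ ((bY (k + 1) - bY k) + (bZ (k + 1) - bZ k)) / 2 := by
    intro k
    have hm : 𝒢 (k + 1) ≤ m0 := h𝒢le (k + 1)
    have hum : StronglyMeasurable[𝒢 (k + 1)] (u k) := stronglyMeasurable_condExp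
    have hvm : StronglyMeasurable[𝒢 (k + 1)] (v k) := stronglyMeasurable_condExp
    set W : Ω → ℝ := fun ω => (U (k + 1) ω - u k ω) * (V (k + 1) ω - v k ω) with hWdef
    have hUV : Integrable (fun ω => U (k + 1) ω * V (k + 1) ω) P :=
      l2_mul_integrable (hUL2 _) (hVL2 _)
    have huV : Integrable (fun ω => u k ω * V (k + 1) ω) P :=
      l2_mul_integrable (hu2 k) (hVL2 _)
    have hvU : Integrable (fun ω => v k ω * U (k + 1) ω) P :=
      l2_mul_integrable (hv2 k) (hUL2 _)
    have huv : Integrable (fun ω => u k ω * v k ω) P := l2_mul_integrable (hu2 k) (hv2 k)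
    have hA : P[(fun ω => (U (k + 1) ω * V (k + 1) ω - u k ω * V (k + 1) ω)) | 𝒢 (k + 1)]
        =ᵐ[P] (P[fun ω' => U (k + 1) ω' * V (k + 1) ω' | 𝒢 (k + 1)])
          - fun ω => u k ω * v k ω := by
      refine (condExp_sub (f := fun ω => U (k + 1) ω * V (k + 1) ω)
        (g := fun ω => u k ω * V (k + 1) ω) hUV huV (m := 𝒢 (k + 1))).trans ?_
      have h1 : P[(fun ω => u k ω * V (k + 1) ω) | 𝒢 (k + 1)]
          =ᵐ[P] u k * P[V (k + 1) | 𝒢 (k + 1)] := by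
        have huV' : Integrable (u k * V (k + 1)) P := huV
        exact condExp_mul_of_stronglyMeasurable_left hum huV' ((hVL2 _).integrable one_le_two)
      exact EventuallyEq.rfl.sub h1
    have hB : P[(fun ω => (v k ω * U (k + 1) ω - u k ω * v k ω)) | 𝒢 (k + 1)]
        =ᵐ[P] (fun ω => v k ω * u k ω) - fun ω => u k ω * v k ω := by
      refine (condExp_sub (f := fun ω => v k ω * U (k + 1) ω)
        (g := fun ω => u k ω * v k ω) hvU huv (m := 𝒢 (k + 1))).trans ?_
      have h1 : P[(fun ω => v k ω * U (k + 1) ω) | 𝒢 (k + 1)]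
          =ᵐ[P] v k * P[U (k + 1) | 𝒢 (k + 1)] := by
        have hvU' : Integrable (v k * U (k + 1)) P := hvU
        exact condExp_mul_of_stronglyMeasurable_left hvm hvU' ((hUL2 _).integrable one_le_two)
      have h2 : P[(fun ω => u k ω * v k ω) | 𝒢 (k + 1)] = fun ω => u k ω * v k ω :=
        condExp_of_stronglyMeasurable hm (hum.mul hvm) huv
      rw [h2]
      exact h1.sub EventuallyEq.rfl
    have hWsplit : W = (fun ω => (U (k + 1) ω * V (k + 1) ω - u k ω * V (k + 1) ω))
        - fun ω => (v k ω * U (k + 1) ω - u k ω * v k ω) := by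
      funext ω; simp only [Pi.sub_apply]; ring
    have hWc : P[W | 𝒢 (k + 1)] =ᵐ[P] fun ω => Cov k ω := by
      rw [hWsplit]
      refine (condExp_sub (f := fun ω => (U (k + 1) ω * V (k + 1) ω - u k ω * V (k + 1) ω))
        (g := fun ω => (v k ω * U (k + 1) ω - u k ω * v k ω)) (hUV.sub huV)
        (hvU.sub huv) (m := 𝒢 (k + 1))).trans ?_
      filter_upwards [hA, hB] with ω h1 h2
      simp only [Pi.sub_apply] at h1 h2 ⊢
      rw [h1, h2]
      simp only [hCovdef]
      ring
    have hstep1 : term k = ∫ ω, |(P[W | 𝒢 (k + 1)]) ω| ∂P := by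
      refine (integral_congr_ae (hWc.mono fun ω hω => ?_)).symm
      rw [hω]
    have hstep2 : ∫ ω, |(P[W | 𝒢 (k + 1)]) ω| ∂P ≤ ∫ ω, |W ω| ∂P := integral_abs_condExp_le W
    have hstep3 : ∫ ω, |W ω| ∂P
        ≤ ∫ ω, ((U (k + 1) ω - u k ω) ^ 2 + (V (k + 1) ω - v k ω) ^ 2) / 2 ∂P := by
      have hWint : Integrable (fun ω => |W ω|) P :=
        (l2_mul_integrable ((hUL2 _).sub (hu2 k)) ((hVL2 _).sub (hv2 k))).abs
      have hI1 : Integrable (fun ω => (U (k + 1) ω - u k ω) ^ 2) P :=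
        ((hUL2 _).sub (hu2 k)).integrable_sq
      have hI2 : Integrable (fun ω => (V (k + 1) ω - v k ω) ^ 2) P :=
        ((hVL2 _).sub (hv2 k)).integrable_sq
      have hint2 : Integrable
          (fun ω => ((U (k + 1) ω - u k ω) ^ 2 + (V (k + 1) ω - v k ω) ^ 2) / 2) P :=
        (hI1.add hI2).div_const 2
      refine integral_mono hWint hint2 fun ω => ?_
      simp only [hWdef]
      exact abs_mul_le_half _ _
    have hI1' : Integrable (fun ω => (U (k + 1) ω - u k ω) ^ 2) P :=
      ((hUL2 _).sub (hu2 k)).integrable_sq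
    have hI2' : Integrable (fun ω => (V (k + 1) ω - v k ω) ^ 2) P :=
      ((hVL2 _).sub (hv2 k)).integrable_sq
    have hstep4 : ∫ ω, ((U (k + 1) ω - u k ω) ^ 2 + (V (k + 1) ω - v k ω) ^ 2) / 2 ∂P
        = ((bY (k + 1) - bY k) + (bZ (k + 1) - bZ k)) / 2 := by
      rw [integral_div, integral_add hI1' hI2', hdY k, hdZ k]
    calc term k = ∫ ω, |(P[W | 𝒢 (k + 1)]) ω| ∂P := hstep1
      _ ≤ ∫ ω, |W ω| ∂P := hstep2
      _ ≤ _ := hstep3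
      _ = _ := hstep4
  have htermnn : ∀ k, 0 ≤ term k := fun k => integral_nonneg fun ω => abs_nonneg _
  -- summability
  have hbY0 : 0 ≤ bY 0 := integral_nonneg fun ω => sq_nonneg _
  have hbZ0 : 0 ≤ bZ 0 := integral_nonneg fun ω => sq_nonneg _
  have hesum : Summable (fun k => ((bY (k + 1) - bY k) + (bZ (k + 1) - bZ k)) / 2) := by
    refine summable_of_sum_range_le
      (c := ((∫ ω, (Y ω) ^ 2 ∂P) + (∫ ω, (Z ω) ^ 2 ∂P)) / 2)
      (fun n => by have := hdYnn n; have := hdZnn n; linarith) fun n => ?_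
    have h1 : ∑ i ∈ Finset.range n, ((bY (i + 1) - bY i) + (bZ (i + 1) - bZ i)) / 2
        = ((bY n - bY 0) + (bZ n - bZ 0)) / 2 := by
      rw [← Finset.sum_div, Finset.sum_add_distrib, Finset.sum_range_sub,
        Finset.sum_range_sub]
    rw [h1]
    have h2 := hbYle n
    have h3 := hbZle n
    linarith
  have hsum : Summable term := hesum.of_nonneg_of_le htermnn htermle
  -- a N = ∫ Y * V N
  have haY : ∀ N, a N = ∫ ω, Y ω * V N ω ∂P := by
    intro N
    have h := integral_mul_condexp_eq (P := P) (hℱle N) (hVm N) (hVL2 N) hY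
    calc a N = ∫ ω, V N ω * U N ω ∂P := by
          show (∫ ω, U N ω * V N ω ∂P) = ∫ ω, V N ω * U N ω ∂P
          congr 1; funext ω; ring
      _ = ∫ ω, V N ω * Y ω ∂P := h.symm
      _ = ∫ ω, Y ω * V N ω ∂P := by congr 1; funext ω; ring
  -- convergence of the energies of Z
  have hbZmono : Monotone bZ := monotone_nat_of_le_succ fun n => by have := hdZnn n; linarith
  have hbZbdd : BddAbove (Set.range bZ) := ⟨∫ ω, (Z ω) ^ 2 ∂P, by
    rintro x ⟨N, rfl⟩; exact hbZle N⟩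
  have hbZtend : Tendsto bZ atTop (𝓝 (⨆ N, bZ N)) := tendsto_atTop_ciSup hbZmono hbZbdd
  set L := ⨆ N, bZ N with hLdef
  have hLle : L ≤ ∫ ω, (Z ω) ^ 2 ∂P := ciSup_le hbZle
  have hL0 : 0 ≤ L := le_trans hbZ0 (le_ciSup hbZbdd 0)
  -- a.e. convergence of V N to Z (Lévy)
  have hZint : Integrable Z P := hZ.integrable one_le_two
  have hZsm : StronglyMeasurable[⨆ n, ℱ n] Z := hZmeas.stronglyMeasurable
  have hae : ∀ᵐ ω ∂P, Tendsto (fun N => V N ω) atTop (𝓝 (Z ω)) := by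
    exact hZint.tendsto_ae_condExp (ℱ := ⟨ℱ, hℱmono, hℱle⟩) hZsm
  -- Fatou: ∫ Z² ≤ L
  have hVmeas : ∀ N, AEMeasurable (fun ω => ENNReal.ofReal ((V N ω) ^ 2)) P := by
    intro N
    exact (ENNReal.measurable_ofReal.comp
      (((hVm N).mono (hℱle N)).measurable.pow_const 2)).aemeasurable
  have hfatou : ENNReal.ofReal (∫ ω, (Z ω) ^ 2 ∂P) ≤ ENNReal.ofReal L := by
    have h1 : ENNReal.ofReal (∫ ω, (Z ω) ^ 2 ∂P) = ∫⁻ ω, ENNReal.ofReal ((Z ω) ^ 2) ∂P :=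
      ofReal_integral_eq_lintegral_ofReal hZ.integrable_sq
        (Eventually.of_forall fun ω => sq_nonneg _)
    have h2 : ∀ N, ENNReal.ofReal (bZ N) = ∫⁻ ω, ENNReal.ofReal ((V N ω) ^ 2) ∂P := fun N =>
      ofReal_integral_eq_lintegral_ofReal (hVL2 N).integrable_sq
        (Eventually.of_forall fun ω => sq_nonneg _)
    have h4 : ∫⁻ ω, ENNReal.ofReal ((Z ω) ^ 2) ∂P
        = ∫⁻ ω, liminf (fun N => ENNReal.ofReal ((V N ω) ^ 2)) atTop ∂P := by
      refine lintegral_congr_ae (hae.mono fun ω hω => ?_)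
      have h5 : Tendsto (fun N => ENNReal.ofReal ((V N ω) ^ 2)) atTop
          (𝓝 (ENNReal.ofReal ((Z ω) ^ 2))) :=
        ENNReal.tendsto_ofReal (hω.pow 2)
      exact h5.liminf_eq.symm
    have h3 : ∫⁻ ω, ENNReal.ofReal ((Z ω) ^ 2) ∂P
        ≤ liminf (fun N => ∫⁻ ω, ENNReal.ofReal ((V N ω) ^ 2) ∂P) atTop := by
      rw [h4]
      exact lintegral_liminf_le' hVmeas
    have h5 : liminf (fun N => ∫⁻ ω, ENNReal.ofReal ((V N ω) ^ 2) ∂P) atTop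
        = ENNReal.ofReal L := by
      have h6 : Tendsto (fun N => ENNReal.ofReal (bZ N)) atTop (𝓝 (ENNReal.ofReal L)) :=
        ENNReal.tendsto_ofReal hbZtend
      simp_rw [← h2]
      exact h6.liminf_eq
    rw [h1]
    exact h3.trans h5.le
  have hLZ : (∫ ω, (Z ω) ^ 2 ∂P) ≤ L := (ENNReal.ofReal_le_ofReal_iff hL0).mp hfatou
  have hLeq : L = ∫ ω, (Z ω) ^ 2 ∂P := le_antisymm hLle hLZ
  -- c N → 0
  have hcN : Tendsto (fun N => ∫ ω, (Z ω - V N ω) ^ 2 ∂P) atTop (𝓝 0) := by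
    have h1 : ∀ N, ∫ ω, (Z ω - V N ω) ^ 2 ∂P = (∫ ω, (Z ω) ^ 2 ∂P) - bZ N := fun N =>
      pythagoras (P := P) (hℱle N) hZ
    simp_rw [h1]
    have h2 := hbZtend
    rw [hLeq] at h2
    have h3 : Tendsto (fun N => (∫ ω, (Z ω) ^ 2 ∂P) - bZ N) atTop
        (𝓝 ((∫ ω, (Z ω) ^ 2 ∂P) - (∫ ω, (Z ω) ^ 2 ∂P))) := tendsto_const_nhds.sub h2
    simpa using h3
  -- Cauchy–Schwarz bound for a N - ∫ Y Z
  have hCS : ∀ N, |a N - ∫ ω, Y ω * Z ω ∂P|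
      ≤ (∫ ω, (Y ω) ^ 2 ∂P) ^ ((1:ℝ)/2) * (∫ ω, (Z ω - V N ω) ^ 2 ∂P) ^ ((1:ℝ)/2) := by
    intro N
    have hYV : Integrable (fun ω => Y ω * V N ω) P := l2_mul_integrable hY (hVL2 N)
    have hYZ : Integrable (fun ω => Y ω * Z ω) P := l2_mul_integrable hY hZ
    have hWN : MemLp (fun ω => Z ω - V N ω) 2 P := hZ.sub (hVL2 N)
    have h1 : a N - ∫ ω, Y ω * Z ω ∂P = - ∫ ω, Y ω * (Z ω - V N ω) ∂P := by
      rw [haY N, ← integral_neg, ← integral_sub hYV hYZ]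
      congr 1; funext ω; ring
    rw [h1, abs_neg]
    have h2 : |∫ ω, Y ω * (Z ω - V N ω) ∂P| ≤ ∫ ω, |Y ω * (Z ω - V N ω)| ∂P := by
      simpa only [Real.norm_eq_abs] using norm_integral_le_integral_norm (μ := P)
        (f := fun ω => Y ω * (Z ω - V N ω))
    refine h2.trans ?_
    have h3 : ∫ ω, |Y ω * (Z ω - V N ω)| ∂P = ∫ ω, ‖Y ω‖ * ‖Z ω - V N ω‖ ∂P := by
      congr 1; funext ω; rw [abs_mul]; rfl
    rw [h3]
    have hconj : (2:ℝ).HolderConjugate 2 := by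
      constructor <;> norm_num
    have he2 : ENNReal.ofReal (2:ℝ) = 2 := by norm_num
    have h4 := integral_mul_norm_le_Lp_mul_Lq (μ := P) (f := Y)
      (g := fun ω => Z ω - V N ω) hconj (by rw [he2]; exact hY) (by rw [he2]; exact hWN)
    have e1 : ∫ ω, ‖Y ω‖ ^ (2:ℝ) ∂P = ∫ ω, (Y ω) ^ 2 ∂P := by
      congr 1; funext ω
      rw [Real.norm_eq_abs, show (2:ℝ) = ((2:ℕ):ℝ) by norm_num, Real.rpow_natCast, sq_abs]
    have e2 : ∫ ω, ‖Z ω - V N ω‖ ^ (2:ℝ) ∂P = ∫ ω, (Z ω - V N ω) ^ 2 ∂P := by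
      congr 1; funext ω
      rw [Real.norm_eq_abs, show (2:ℝ) = ((2:ℕ):ℝ) by norm_num, Real.rpow_natCast, sq_abs]
    rw [e1, e2] at h4
    exact h4
  -- convergence of a
  have hbound : Tendsto (fun N =>
      (∫ ω, (Y ω) ^ 2 ∂P) ^ ((1:ℝ)/2) * (∫ ω, (Z ω - V N ω) ^ 2 ∂P) ^ ((1:ℝ)/2)) atTop
      (𝓝 0) := by
    have h2 : Tendsto (fun N => (∫ ω, (Z ω - V N ω) ^ 2 ∂P) ^ ((1:ℝ)/2)) atTop (𝓝 0) := by
      have hc' : ∀ N, (∫ ω, (Z ω - V N ω) ^ 2 ∂P) ^ ((1:ℝ)/2)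
          = Real.sqrt (∫ ω, (Z ω - V N ω) ^ 2 ∂P) := fun N => (Real.sqrt_eq_rpow _).symm
      simp_rw [hc']
      have h5 := (Real.continuous_sqrt.tendsto 0).comp hcN
      simpa [Function.comp_def] using h5
    have h6 := h2.const_mul ((∫ ω, (Y ω) ^ 2 ∂P) ^ ((1:ℝ)/2))
    simpa using h6
  have haT : Tendsto a atTop (𝓝 (∫ ω, Y ω * Z ω ∂P)) := by
    rw [tendsto_iff_dist_tendsto_zero]
    simp_rw [Real.dist_eq]
    exact squeeze_zero (fun N => abs_nonneg _) hCS hbound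
  -- conclusion
  have h1 : Tendsto (fun N => |a N - a 0|) atTop
      (𝓝 |(∫ ω, Y ω * Z ω ∂P) - (∫ ω, Y ω ∂P) * (∫ ω, Z ω ∂P)|) := by
    rw [← ha0]
    exact (haT.sub_const (a 0)).abs
  have h2 : Tendsto (fun N => ∑ k ∈ Finset.range N, term k) atTop (𝓝 (∑' k, term k)) :=
    hsum.hasSum.tendsto_sum_nat
  exact le_of_tendsto_of_tendsto' h1 h2 hparts
end
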